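/- For every multiindex β ∈ ℕ^n and every m ∈ ℕ with |β| ≤ m, the sum over multiindices α ∈ ℕ^n with β ≤ α (componentwise) and |α| = m of ∏_j C(α_j, β_j) equals C(m + n - 1, |β| + n - 1). -/

import Mathlib

open Finset

/-- Convolution identity: `∑_{i≤k} C(a+i,i) C(b+(k-i), k-i) = C(a+b+k+1, k)`. -/
private lemma convG (b : ℕ) : ∀ k a : ℕ,
    (∑ i ∈ Finset.range (k + 1),
      (a + i).choose i * (b + (k - i)).choose (k - i)) = (a + b + k + 1).choose k := by
  intro k
  induction k with
  | zero => intro a; simp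
  | succ k ihk =>
    intro a
    induction a with
    | zero =>
      have h1 : (∑ i ∈ Finset.range (k + 1 + 1),
          (0 + i).choose i * (b + (k + 1 - i)).choose (k + 1 - i))
          = ∑ i ∈ Finset.range (k + 2), (b + i).choose b := by
        rw [← Finset.sum_range_reflect (fun i => (b + i).choose b) (k + 2)]
        refine Finset.sum_congr rfl fun i hi => ?_
        simp only [zero_add, Nat.choose_self, one_mul]
        have h2 : k + 1 - i = k + 2 - 1 - i := by omega
        rw [h2, ← Nat.choose_symm (Nat.le_add_right _ _), Nat.add_sub_cancel_left]
      rw [h1]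
      have h3 : (∑ i ∈ Finset.range (k + 2), (b + i).choose b)
          = (b + k + 2).choose (b + 1) := by
        rw [← Nat.sum_Icc_choose (b + k + 1) b, ← Finset.Ico_add_one_right_eq_Icc,
          Finset.sum_Ico_eq_sum_range]
        have hr : b + k + 1 + 1 - b = k + 2 := by omega
        rw [hr]
      rw [h3, show b + 1 = (b + k + 2) - (k + 1) by omega,
        Nat.choose_symm (by omega)]
      congr 1
      omega
    | succ a iha =>
      have key : (∑ i ∈ Finset.range (k + 1 + 1),
          (a + 1 + i).choose i * (b + (k + 1 - i)).choose (k + 1 - i))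
          = (∑ i ∈ Finset.range (k + 1),
              (a + 1 + i).choose i * (b + (k - i)).choose (k - i))
            + ∑ i ∈ Finset.range (k + 1 + 1),
              (a + i).choose i * (b + (k + 1 - i)).choose (k + 1 - i) := by
        rw [Finset.sum_range_succ'
          (fun i => (a + 1 + i).choose i * (b + (k + 1 - i)).choose (k + 1 - i)) (k + 1)]
        rw [Finset.sum_range_succ'
          (fun i => (a + i).choose i * (b + (k + 1 - i)).choose (k + 1 - i)) (k + 1)]
        have hterm : ∀ i : ℕ,
            (a + 1 + (i + 1)).choose (i + 1) * (b + (k + 1 - (i + 1))).choose (k + 1 - (i + 1))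
            = (a + 1 + i).choose i * (b + (k - i)).choose (k - i)
              + (a + (i + 1)).choose (i + 1) * (b + (k + 1 - (i + 1))).choose (k + 1 - (i + 1)) := by
          intro i
          have e1 : a + 1 + (i + 1) = (a + 1 + i) + 1 := by omega
          have e2 : k + 1 - (i + 1) = k - i := by omega
          have e3 : a + (i + 1) = a + 1 + i := by omega
          rw [e1, e2, e3, Nat.choose_succ_succ, add_mul]
        simp only [hterm]
        rw [Finset.sum_add_distrib]
        simp only [Nat.choose_zero_right, one_mul]
        ring
      rw [key, ihk (a + 1), iha]
      have hps : (a + b + k + 2 + 1).choose (k + 1)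
          = (a + b + k + 2).choose k + (a + b + k + 2).choose (k + 1) :=
        Nat.choose_succ_succ _ _
      rw [show a + 1 + b + k + 1 = a + b + k + 2 by omega,
        show a + b + (k + 1) + 1 = a + b + k + 2 by omega,
        show a + 1 + b + (k + 1) + 1 = a + b + k + 2 + 1 by omega, hps]

/-- Splitting a sum over `antidiagonalTuple (n+1) t`. -/
private lemma sum_adt_succ {M : Type*} [AddCommMonoid M] (n t : ℕ)
    (f : (Fin (n + 1) → ℕ) → M) :
    ∑ x ∈ Finset.Nat.antidiagonalTuple (n + 1) t, f x =
      ∑ ij ∈ Finset.HasAntidiagonal.antidiagonal t,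
        ∑ x ∈ Finset.Nat.antidiagonalTuple n ij.2, f (Fin.cons ij.1 x) := by
  rw [Finset.sum_sigma' (Finset.HasAntidiagonal.antidiagonal t)
    (fun ij => Finset.Nat.antidiagonalTuple n ij.2) (fun ij x => f (Fin.cons ij.1 x))]
  refine Finset.sum_bij'
    (i := fun (x : Fin (n + 1) → ℕ) (_ : x ∈ Finset.Nat.antidiagonalTuple (n + 1) t) =>
      (⟨(x 0, ∑ j : Fin n, x j.succ), Fin.tail x⟩ : Σ _ : ℕ × ℕ, (Fin n → ℕ)))
    (j := fun (p : Σ _ : ℕ × ℕ, (Fin n → ℕ)) _ => Fin.cons p.1.1 p.2) ?_ ?_ ?_ ?_ ?_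
  · intro x hx
    rw [Finset.Nat.mem_antidiagonalTuple, Fin.sum_univ_succ] at hx
    simp only [Finset.mem_sigma, Finset.HasAntidiagonal.mem_antidiagonal, Finset.Nat.mem_antidiagonalTuple]
    exact ⟨hx, rfl⟩
  · intro p hp
    simp only [Finset.mem_sigma, Finset.HasAntidiagonal.mem_antidiagonal,
      Finset.Nat.mem_antidiagonalTuple] at hp
    rw [Finset.Nat.mem_antidiagonalTuple, Fin.sum_univ_succ]
    simp only [Fin.cons_zero, Fin.cons_succ]
    rw [hp.2, hp.1]
  · intro x _
    exact Fin.cons_self_tail x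
  · intro p hp
    simp only [Finset.mem_sigma, Finset.HasAntidiagonal.mem_antidiagonal,
      Finset.Nat.mem_antidiagonalTuple] at hp
    refine Sigma.ext ?_ (heq_of_eq ?_)
    · simp only [Fin.cons_zero, Fin.cons_succ]
      exact Prod.ext rfl hp.2
    · funext j
      simp [Fin.tail]
  · intro x _
    rw [Fin.cons_self_tail x]

/-- Key lemma: `∑_{γ ∈ antidiagonalTuple (n+1) t} ∏ⱼ C(βⱼ+γⱼ, γⱼ) = C(|β|+t+n, t)`. -/
private lemma tuple_sum : ∀ (n : ℕ) (β : Fin (n + 1) → ℕ) (t : ℕ),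
    (∑ γ ∈ Finset.Nat.antidiagonalTuple (n + 1) t,
      ∏ j, (β j + γ j).choose (γ j)) = ((∑ j, β j) + t + n).choose t := by
  intro n
  induction n with
  | zero =>
    intro β t
    simp [Fin.sum_univ_one, Fin.prod_univ_one]
  | succ n ih =>
    intro β t
    rw [sum_adt_succ]
    have hinner : ∀ ij : ℕ × ℕ,
        (∑ x ∈ Finset.Nat.antidiagonalTuple (n + 1) ij.2,
          ∏ j : Fin (n + 2), (β j + (Fin.cons ij.1 x : Fin (n+2) → ℕ) j).choose
            ((Fin.cons ij.1 x : Fin (n+2) → ℕ) j))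
        = (β 0 + ij.1).choose ij.1 *
            (((∑ j : Fin (n + 1), β j.succ) + ij.2 + n).choose ij.2) := by
      intro ij
      rw [← ih (fun j : Fin (n + 1) => β j.succ) ij.2, Finset.mul_sum]
      refine Finset.sum_congr rfl fun x _ => ?_
      rw [Fin.prod_univ_succ]
      simp [Fin.cons_zero, Fin.cons_succ]
    simp only [hinner]
    rw [Finset.Nat.sum_antidiagonal_eq_sum_range_succ_mk]
    have := convG ((∑ j : Fin (n+1), β j.succ) + n) t (β 0)
    rw [show (∑ j, β j) + t + (n + 1) = β 0 + ((∑ j : Fin (n+1), β j.succ) + n) + t + 1 by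
        rw [Fin.sum_univ_succ]; ring, ← this]
    refine Finset.sum_congr rfl fun i _ => ?_
    congr 2
    omega

/-- For `n ≥ 1` and a multiindex `β ∈ ℕⁿ` with `|β| ≤ m`,
`∑_{β ≤ α, |α| = m} ∏ⱼ C(αⱼ, βⱼ) = C(m+n-1, |β|+n-1)`. -/
theorem sum_choose_multiindex_eq (n m : ℕ) (hn : 1 ≤ n) (β : Fin n → ℕ)
    (hβ : ∑ j, β j ≤ m) :
    (∑ α ∈ (Finset.Nat.antidiagonalTuple n m).filter
        (fun α => ∀ j, β j ≤ α j),
        ∏ j, (α j).choose (β j)) =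
      (m + n - 1).choose ((∑ j, β j) + n - 1) := by
  obtain ⟨n, rfl⟩ : ∃ n', n = n' + 1 := ⟨n - 1, by omega⟩
  have hreidx : (∑ α ∈ (Finset.Nat.antidiagonalTuple (n+1) m).filter
        (fun α => ∀ j, β j ≤ α j),
        ∏ j, (α j).choose (β j))
      = ∑ γ ∈ Finset.Nat.antidiagonalTuple (n + 1) (m - ∑ j, β j),
          ∏ j, (β j + γ j).choose (γ j) := by
    refine Finset.sum_nbij' (fun α j => α j - β j) (fun γ j => β j + γ j) ?_ ?_ ?_ ?_ ?_
    · intro α hα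
      rw [Finset.mem_filter, Finset.Nat.mem_antidiagonalTuple] at hα
      rw [Finset.Nat.mem_antidiagonalTuple]
      have : ∑ j, (α j - β j) = (∑ j, α j) - ∑ j, β j :=
        Finset.sum_tsub_distrib Finset.univ (fun j _ => hα.2 j)
      rw [this, hα.1]
    · intro γ hγ
      rw [Finset.Nat.mem_antidiagonalTuple] at hγ
      rw [Finset.mem_filter, Finset.Nat.mem_antidiagonalTuple]
      refine ⟨?_, fun j => Nat.le_add_right _ _⟩
      rw [Finset.sum_add_distrib, hγ]
      exact Nat.add_sub_cancel' hβ
    · intro α hα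
      rw [Finset.mem_filter] at hα
      funext j
      exact Nat.add_sub_cancel' (hα.2 j)
    · intro γ _
      funext j
      exact Nat.add_sub_cancel_left _ _
    · intro α hα
      rw [Finset.mem_filter] at hα
      refine Finset.prod_congr rfl fun j _ => ?_
      show (α j).choose (β j) = (β j + (α j - β j)).choose (α j - β j)
      rw [Nat.add_sub_cancel' (hα.2 j), ← Nat.choose_symm (hα.2 j)]
  rw [hreidx, tuple_sum n β (m - ∑ j, β j)]
  clear hreidx
  generalize hS : (∑ j, β j) = S at hβ ⊢
  obtain ⟨t, rfl⟩ : ∃ t, m = S + t := ⟨m - S, Nat.add_sub_cancel' hβ |>.symm⟩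
  have e1 : S + t - S = t := Nat.add_sub_cancel_left S t
  have e2 : S + t + (n + 1) - 1 = S + t + n := by omega
  have e3 : S + (n + 1) - 1 = (S + t + n) - t := by omega
  rw [e1, e2, e3]
  exact (Nat.choose_symm (by omega)).symm
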